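/- arXiv:1502.00959 — 3 statements merged into one kernel-verified Lean document; each statement's English description precedes it below -/
import Mathlib

section
/- For 1 ≤ r ≤ n, the exterior power Λ^{r−1}(Aug(ℂ^n)) is a simple ℂ[T_n]-module. -/
open Finset in
/-- The natural representation of the full transformation monoid `Function.End (Fin n)`
on `ℂ^n`, determined by `f · v_i = v_{f i}` on the standard basis. -/
noncomputable def natRep (n : ℕ) :
    Representation ℂ (Function.End (Fin n)) (Fin n → ℂ) where
  toFun f :=
    { toFun := fun x j => ∑ i, if f i = j then x i else 0
      map_add' := by
        intro x y
        funext j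
        simp only [Pi.add_apply]
        rw [← Finset.sum_add_distrib]
        congr 1; funext i; split <;> simp
      map_smul' := by
        intro c x
        funext j
        simp [Finset.mul_sum, apply_ite (fun t => c * t)] }
  map_one' := by
    refine LinearMap.ext fun x => funext fun j => ?_
    show (∑ i, if (1 : Function.End (Fin n)) i = j then x i else 0) = x j
    have h : ∀ i : Fin n, (1 : Function.End (Fin n)) i = i := fun _ => rfl
    simp only [h]
    rw [Finset.sum_ite_eq' Finset.univ j x]
    simp
  map_mul' := by
    intro f g
    refine LinearMap.ext fun x => funext fun j => ?_
    show (∑ i, if f (g i) = j then x i else 0)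
        = ∑ k, if f k = j then ∑ i, if g i = k then x i else 0 else 0
    have key : ∀ k, (if f k = j then ∑ i, if g i = k then x i else 0 else 0)
        = ∑ i, if g i = k then (if f k = j then x i else 0) else 0 := by
      intro k; split
      · rfl
      · simp
    rw [Finset.sum_congr rfl (fun k _ => key k), Finset.sum_comm]
    refine Finset.sum_congr rfl fun i _ => ?_
    rw [Finset.sum_ite_eq Finset.univ (g i) (fun k => if f k = j then x i else 0)]
    simp

lemma sum_natRep (n : ℕ) (f : Function.End (Fin n)) (x : Fin n → ℂ) :
    ∑ j, natRep n f x j = ∑ i, x i := by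
  show ∑ j, ∑ i, (if f i = j then x i else 0) = _
  rw [Finset.sum_comm]
  simp [Finset.sum_ite_eq' Finset.univ]

/-- The augmentation submodule `Aug(ℂ^n)` of the natural module: vectors whose
coordinates sum to zero. -/
noncomputable def Aug (n : ℕ) : Submodule ℂ (Fin n → ℂ) where
  carrier := {x | ∑ i, x i = 0}
  add_mem' := by intro a b ha hb; simp_all [Finset.sum_add_distrib]
  zero_mem' := by simp
  smul_mem' := by intro c a ha; simp_all [← Finset.mul_sum]

lemma natRep_mem_aug (n : ℕ) (f : Function.End (Fin n)) {x : Fin n → ℂ}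
    (hx : x ∈ Aug n) : natRep n f x ∈ Aug n := by
  have : ∑ j, natRep n f x j = 0 := by rw [sum_natRep]; exact hx
  exact this

/-- The representation of the full transformation monoid on the augmentation submodule. -/
noncomputable def augRep (n : ℕ) : Representation ℂ (Function.End (Fin n)) (Aug n) where
  toFun f := (natRep n f).restrict (p := Aug n) (q := Aug n) (fun _ hx => natRep_mem_aug n f hx)
  map_one' := by
    refine LinearMap.ext fun x => Subtype.ext ?_
    simp [LinearMap.restrict_apply]
  map_mul' := by
    intro f g
    refine LinearMap.ext fun x => Subtype.ext ?_
    simp [LinearMap.restrict_apply]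

lemma extAlg_map_mem {R M N : Type} [CommRing R] [AddCommGroup M] [Module R M]
    [AddCommGroup N] [Module R N] (r : ℕ) (f : M →ₗ[R] N) {x : ExteriorAlgebra R M}
    (hx : x ∈ ⋀[R]^r M) : ExteriorAlgebra.map f x ∈ ⋀[R]^r N := by
  rw [← ExteriorAlgebra.ιMulti_span_fixedDegree] at hx ⊢
  induction hx using Submodule.span_induction with
  | mem y hy =>
      obtain ⟨v, rfl⟩ := hy
      rw [ExteriorAlgebra.map_apply_ιMulti]
      exact Submodule.subset_span ⟨f ∘ v, rfl⟩
  | zero => simp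
  | add y z _ _ hy hz => rw [map_add]; exact Submodule.add_mem _ hy hz
  | smul c y _ hy => rw [map_smul]; exact Submodule.smul_mem _ c hy

/-- The linear map between `r`-th exterior powers induced by a linear map. -/
noncomputable def extMap {R M N : Type} [CommRing R] [AddCommGroup M] [Module R M]
    [AddCommGroup N] [Module R N] (r : ℕ) (f : M →ₗ[R] N) :
    ⋀[R]^r M →ₗ[R] ⋀[R]^r N :=
  (ExteriorAlgebra.map f).toLinearMap.restrict (p := ⋀[R]^r M) (q := ⋀[R]^r N)
    (fun _ hx => extAlg_map_mem r f hx)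

/-- The representation of the full transformation monoid on the `r`-th exterior power
of the natural module, by the diagonal action on wedge products. -/
noncomputable def extRep (n r : ℕ) :
    Representation ℂ (Function.End (Fin n)) (⋀[ℂ]^r (Fin n → ℂ)) where
  toFun f := extMap r (natRep n f)
  map_one' := by
    refine LinearMap.ext fun x => Subtype.ext ?_
    simp [extMap, LinearMap.restrict_apply, map_one, Module.End.one_eq_id,
      ExteriorAlgebra.map_id]
  map_mul' := by
    intro f g
    refine LinearMap.ext fun x => Subtype.ext ?_
    simp only [extMap, LinearMap.restrict_apply, map_mul, Module.End.mul_eq_comp,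
      ← ExteriorAlgebra.map_comp_map]
    rfl

set_option synthInstance.maxHeartbeats 1000000 in
/-- The representation of the full transformation monoid on the `r`-th exterior power
of the augmentation submodule. -/
noncomputable def extAugRep (n r : ℕ) :
    Representation ℂ (Function.End (Fin n)) (⋀[ℂ]^r ↥(Aug n)) where
  toFun f := extMap r (augRep n f)
  map_one' := by
    refine LinearMap.ext fun x => Subtype.ext ?_
    simp [extMap, LinearMap.restrict_apply, map_one, Module.End.one_eq_id,
      ExteriorAlgebra.map_id]
  map_mul' := by
    intro f g
    refine LinearMap.ext fun x => Subtype.ext ?_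
    simp only [extMap, LinearMap.restrict_apply, map_mul, Module.End.mul_eq_comp,
      ← ExteriorAlgebra.map_comp_map]
    rfl

/-- The idempotent `e_m ∈ T_n` fixing the first `m` points and sending all other
points to the first point. -/
def eIdem (n m : ℕ) : Function.End (Fin n) :=
  fun i => if h : (i : ℕ) < m then i else ⟨0, i.pos⟩

/-- The embedding of the symmetric group `S_r` into `T_n` as the maximal subgroup
at the idempotent `eIdem n r` (elements `g` with `e g e = g` invertible in `e T_n e`). -/
def permEmbed (n r : ℕ) (hr : 1 ≤ r) (hrn : r ≤ n) (σ : Equiv.Perm (Fin r)) :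
    Function.End (Fin n) :=
  fun i => Fin.castLE hrn (σ (if hi : (i : ℕ) < r then ⟨i, hi⟩ else ⟨0, hr⟩))

/-- The idempotent `η = (1/r!) ∑_{g ∈ G} sgn(g|_{[r]}) g` of the monoid algebra,
where `G ≅ S_r` is the maximal subgroup at `eIdem n r`. -/
noncomputable def eta (n r : ℕ) (hr : 1 ≤ r) (hrn : r ≤ n) :
    MonoidAlgebra ℂ (Function.End (Fin n)) :=
  (r.factorial : ℂ)⁻¹ • ∑ σ : Equiv.Perm (Fin r),
    MonoidAlgebra.single (permEmbed n r hr hrn σ) ((Equiv.Perm.sign σ : ℤ) : ℂ)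

/-- A permutation of `Fin m`, viewed as an element of the transformation monoid. -/
def permToEnd (m : ℕ) : Equiv.Perm (Fin m) →* Function.End (Fin m) where
  toFun σ := ⇑σ
  map_one' := rfl
  map_mul' := fun _ _ => rfl

/-- The wedge product of a family of `r` vectors, as an element of the `r`-th
exterior power. -/
noncomputable def wedge {M : Type} [AddCommGroup M] [Module ℂ M] (r : ℕ) (v : Fin r → M) :
    ⋀[ℂ]^r M :=
  ⟨ExteriorAlgebra.ιMulti ℂ r v, ExteriorAlgebra.ιMulti_range ℂ r ⟨v, rfl⟩⟩

/-- The basis `w_1, …, w_n` of `ℂ^n`: `w_i = v_i - v_n` for `i < n` and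
`w_n = v_1 + ⋯ + v_n`. -/
noncomputable def wBasis (n : ℕ) : Fin n → (Fin n → ℂ) :=
  fun i => if h : (i : ℕ) < n - 1
    then Pi.single i 1 - Pi.single (⟨n - 1, by omega⟩ : Fin n) 1
    else ∑ j, Pi.single j 1

lemma wBasis_mem_aug (n : ℕ) (i : Fin n) (h : (i : ℕ) < n - 1) : wBasis n i ∈ Aug n := by
  show ∑ j, wBasis n i j = 0
  simp [wBasis, h, Finset.sum_sub_distrib, Finset.sum_pi_single]

/-- The vectors `w_i = v_i - v_n` (for `i < n`) as elements of the augmentation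
submodule; junk value `0` otherwise. -/
noncomputable def wAug (n : ℕ) : Fin n → ↥(Aug n) :=
  fun i => if h : (i : ℕ) < n - 1 then ⟨wBasis n i, wBasis_mem_aug n i h⟩ else 0

/-- The trivial representation of the full transformation monoid on `ℂ`. -/
noncomputable def trivRep (n : ℕ) : Representation ℂ (Function.End (Fin n)) ℂ := 1

/-- `projDimLE R M k` : the `R`-module `M` admits a projective resolution of length
at most `k`, i.e. has projective dimension at most `k`. -/
def projDimLE (R : Type) [Ring R] (M : Type) [AddCommMonoid M] [Module R M] (k : ℕ) : Prop :=
  ∃ (P : ℕ → ModuleCat.{0} R) (d : (i : ℕ) → (P (i + 1) →ₗ[R] P i)) (π : P 0 →ₗ[R] M),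
    (∀ i, Module.Projective R (P i)) ∧
    Function.Surjective π ∧
    LinearMap.ker π = LinearMap.range (d 0) ∧
    (∀ i, LinearMap.ker (d i) = LinearMap.range (d (i + 1))) ∧
    (∀ i, k < i → Subsingleton (P i))

/-- The sign character of `S_n`, extended by zero to all of `T_n`. -/
noncomputable def sgnExt (n : ℕ) (f : Function.End (Fin n)) : ℂ :=
  haveI : Decidable (Function.Bijective f) := Fintype.decidableBijectiveFintype f
  if h : Function.Bijective f then ((Equiv.Perm.sign (Equiv.ofBijective f h) : ℤ) : ℂ) else 0

set_option maxHeartbeats 1000000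
set_option synthInstance.maxHeartbeats 1000000

namespace SimpleAuxT

open Finset

variable {n : ℕ}

/-- The last element of `Fin n`. -/
def lastF (n : ℕ) (hn : 0 < n) : Fin n := ⟨n - 1, Nat.sub_lt hn one_pos⟩

/-- The embedding of `Fin (n-1)` into `Fin n`. -/
def embF {n : ℕ} (i : Fin (n - 1)) : Fin n := ⟨i, lt_of_lt_of_le i.2 (Nat.sub_le n 1)⟩

lemma embF_injective : Function.Injective (embF (n := n)) := by
  intro a b h
  have h2 := congrArg Fin.val h
  exact Fin.ext h2

lemma embF_ne_lastF (hn : 0 < n) (i : Fin (n - 1)) : embF i ≠ lastF n hn := by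
  intro h
  have := congrArg Fin.val h
  have h2 := i.2
  simp [embF, lastF] at this
  omega

/-- The vector `u i = v_i - v_last` in the augmentation submodule. -/
noncomputable def uVec (hn : 0 < n) (i : Fin (n - 1)) : ↥(Aug n) :=
  ⟨Pi.single (embF i) 1 - Pi.single (lastF n hn) 1, by
    show ∑ j, (Pi.single (embF i) 1 - Pi.single (lastF n hn) 1 : Fin n → ℂ) j = 0
    simp [Finset.sum_sub_distrib, Pi.single_apply]⟩

lemma uVec_val (hn : 0 < n) (i : Fin (n - 1)) :
    (uVec hn i : Fin n → ℂ) = Pi.single (embF i) 1 - Pi.single (lastF n hn) 1 := rfl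

lemma natRep_single (f : Function.End (Fin n)) (a : Fin n) :
    natRep n f (Pi.single a 1) = Pi.single (f a) 1 := by
  funext j
  have hs : natRep n f (Pi.single a 1) j = ∑ i, if f i = j then (Pi.single a 1 : Fin n → ℂ) i else 0 := rfl
  rw [hs]
  have h1 : ∀ i, (if f i = j then (Pi.single a 1 : Fin n → ℂ) i else 0)
      = if i = a then (if f a = j then (1 : ℂ) else 0) else 0 := by
    intro i
    by_cases h : i = a
    · subst h; simp [Pi.single_apply]
    · simp [Pi.single_apply, h]
  rw [Finset.sum_congr rfl fun i _ => h1 i, Finset.sum_ite_eq' Finset.univ a]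
  simp [Pi.single_apply, eq_comm]

lemma augRep_apply_val (f : Function.End (Fin n)) (v : ↥(Aug n)) :
    (augRep n f v : Fin n → ℂ) = natRep n f (v : Fin n → ℂ) := rfl

lemma augRep_uVec (hn : 0 < n) (f : Function.End (Fin n)) (i : Fin (n - 1)) :
    (augRep n f (uVec hn i) : Fin n → ℂ)
      = Pi.single (f (embF i)) 1 - Pi.single (f (lastF n hn)) 1 := by
  rw [augRep_apply_val, uVec_val, map_sub, natRep_single, natRep_single]

lemma sum_split (hn : 0 < n) (x : Fin n → ℂ) :
    ∑ j, x j = (∑ i : Fin (n - 1), x (embF i)) + x (lastF n hn) := by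
  obtain ⟨m, rfl⟩ : ∃ m, n = m + 1 := ⟨n - 1, by omega⟩
  rw [Fin.sum_univ_castSucc]
  exact congrArg₂ (· + ·) (Finset.sum_congr rfl fun i _ => rfl) rfl

lemma uVec_expand (hn : 0 < n) (v : ↥(Aug n)) :
    v = ∑ i : Fin (n - 1), (v : Fin n → ℂ) (embF i) • uVec hn i := by
  apply Subtype.ext
  rw [Submodule.coe_sum]
  funext j
  rw [Finset.sum_apply]
  simp only [Submodule.coe_smul, Pi.smul_apply, uVec_val, Pi.sub_apply, Pi.single_apply,
    smul_eq_mul]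
  by_cases hj : (j : ℕ) < n - 1
  · have hjl : j ≠ lastF n hn := by
      intro h; have := congrArg Fin.val h; simp [lastF] at this; omega
    have key : ∀ i : Fin (n - 1), (v : Fin n → ℂ) (embF i) *
        ((if j = embF i then (1:ℂ) else 0) - (if j = lastF n hn then (1:ℂ) else 0))
        = if i = ⟨j, hj⟩ then (v : Fin n → ℂ) (embF ⟨j, hj⟩) else 0 := by
      intro i
      have hiff : j = embF i ↔ i = ⟨j, hj⟩ := by
        constructor
        · intro h; exact Fin.ext (congrArg Fin.val h).symm
        · intro h; subst h; rfl
      by_cases h : i = ⟨j, hj⟩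
      · subst h; simp [hiff, hjl]
      · have hne : ¬ j = embF i := fun hh => h (hiff.mp hh)
        simp [h, hjl, hne]
    rw [Finset.sum_congr rfl fun i _ => key i, Finset.sum_ite_eq' Finset.univ]
    have hje : j = embF (⟨j, hj⟩ : Fin (n - 1)) := Fin.ext rfl
    simp [← hje]
  · have hj' : j = lastF n hn := by
      apply Fin.ext; have := j.2; simp [lastF]; omega
    subst hj'
    have hne : ∀ i : Fin (n - 1), ¬ (lastF n hn = embF i) := by
      intro i h; exact embF_ne_lastF hn i h.symm
    have key : ∀ i : Fin (n - 1), (v : Fin n → ℂ) (embF i) *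
        ((if lastF n hn = embF i then (1:ℂ) else 0)
          - (if lastF n hn = lastF n hn then (1:ℂ) else 0))
        = -(v : Fin n → ℂ) (embF i) := by
      intro i; simp [hne i]
    rw [Finset.sum_congr rfl fun i _ => key i]
    have hsum : ∑ j, (v : Fin n → ℂ) j = 0 := v.2
    rw [sum_split hn] at hsum
    have : (v : Fin n → ℂ) (lastF n hn) = -∑ i : Fin (n - 1), (v : Fin n → ℂ) (embF i) := by
      linear_combination hsum
    rw [this, Finset.sum_neg_distrib]

lemma extAugRep_wedge (k : ℕ) (f : Function.End (Fin n)) (v : Fin k → ↥(Aug n)) :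
    extAugRep n k f (wedge k v) = wedge k (fun i => augRep n f (v i)) := by
  apply Subtype.ext
  show (ExteriorAlgebra.map (augRep n f)) (ExteriorAlgebra.ιMulti ℂ k v) = _
  rw [ExteriorAlgebra.map_apply_ιMulti]
  rfl

lemma wedge_eq_zero_of_eq (k : ℕ) (v : Fin k → ↥(Aug n)) {i j : Fin k}
    (h : v i = v j) (hij : i ≠ j) : wedge k v = 0 := by
  apply Subtype.ext
  show ExteriorAlgebra.ιMulti ℂ k v = 0
  exact AlternatingMap.map_eq_zero_of_eq _ v h hij

lemma wedge_coord_zero (k : ℕ) (v : Fin k → ↥(Aug n)) (i : Fin k)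
    (h : v i = 0) : wedge k v = 0 := by
  apply Subtype.ext
  show ExteriorAlgebra.ιMulti ℂ k v = 0
  exact AlternatingMap.map_coord_zero _ i h

lemma wedge_perm (k : ℕ) (v : Fin k → ↥(Aug n)) (σ : Equiv.Perm (Fin k)) :
    wedge k (v ∘ σ) = ((Equiv.Perm.sign σ : ℤ) : ℂ) • wedge k v := by
  apply Subtype.ext
  show ExteriorAlgebra.ιMulti ℂ k (v ∘ σ) = _
  rw [AlternatingMap.map_perm]
  rw [Submodule.coe_smul, Units.smul_def, ← Int.cast_smul_eq_zsmul ℂ]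
  rfl

/-- Spanning of the exterior power by wedges of the `uVec`. -/
lemma wedge_span (hn : 0 < n) (k : ℕ) (y : ⋀[ℂ]^k ↥(Aug n)) :
    y ∈ Submodule.span ℂ (Set.range fun m : Fin k → Fin (n - 1) => wedge k (uVec hn ∘ m)) := by
  classical
  set P := Submodule.span ℂ (Set.range fun m : Fin k → Fin (n - 1) => wedge k (uVec hn ∘ m))
    with hP
  have key : (y : ExteriorAlgebra ℂ ↥(Aug n)) ∈ P.map (Submodule.subtype _) := by
    have hy : (y : ExteriorAlgebra ℂ ↥(Aug n))
        ∈ Submodule.span ℂ (Set.range (ExteriorAlgebra.ιMulti ℂ k)) := by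
      rw [ExteriorAlgebra.ιMulti_span_fixedDegree]; exact y.2
    refine Submodule.span_le.2 ?_ hy
    rintro _ ⟨v, rfl⟩
    have hv : (fun i => v i) = fun i => ∑ j : Fin (n - 1),
        ((v i : Fin n → ℂ) (embF j)) • uVec hn j := by
      funext i; exact uVec_expand hn (v i)
    have hexp : ExteriorAlgebra.ιMulti ℂ k v
        = ∑ m : Fin k → Fin (n - 1),
            (∏ i, (v i : Fin n → ℂ) (embF (m i))) • ExteriorAlgebra.ιMulti ℂ k (uVec hn ∘ m) := by
      calc ExteriorAlgebra.ιMulti ℂ k v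
          = (ExteriorAlgebra.ιMulti ℂ k).toMultilinearMap
            (fun i => ∑ j : Fin (n - 1), ((v i : Fin n → ℂ) (embF j)) • uVec hn j) := by
            rw [← hv]; rfl
        _ = ∑ m : Fin k → Fin (n - 1), (ExteriorAlgebra.ιMulti ℂ k).toMultilinearMap
              (fun i => ((v i : Fin n → ℂ) (embF (m i))) • uVec hn (m i)) :=
            MultilinearMap.map_sum _ _
        _ = ∑ m : Fin k → Fin (n - 1),
              (∏ i, (v i : Fin n → ℂ) (embF (m i))) • ExteriorAlgebra.ιMulti ℂ k (uVec hn ∘ m) := by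
            refine Finset.sum_congr rfl fun m _ => ?_
            exact MultilinearMap.map_smul_univ _ _ _
    rw [hexp]
    refine Submodule.sum_mem _ fun m _ => Submodule.smul_mem _ _ ?_
    exact ⟨wedge k (uVec hn ∘ m), Submodule.subset_span ⟨m, rfl⟩, rfl⟩
  obtain ⟨z, hz, hzy⟩ := key
  have : z = y := Subtype.ext hzy
  exact this ▸ hz

/-- The idempotent fixing `S ∪ {last}` and collapsing everything else to `last`. -/
def fEnd (n : ℕ) (S : Finset (Fin (n - 1))) : Function.End (Fin n) :=
  fun j => if hj : (j : ℕ) < n - 1 then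
    (if (⟨j, hj⟩ : Fin (n - 1)) ∈ S then j else ⟨n - 1, Nat.sub_lt j.pos one_pos⟩) else j

lemma fEnd_emb_mem {S : Finset (Fin (n - 1))} {i : Fin (n - 1)} (hi : i ∈ S) :
    fEnd n S (embF i) = embF i := by
  have hj : ((embF i : Fin n) : ℕ) < n - 1 := i.2
  have : (⟨(embF i : Fin n), hj⟩ : Fin (n - 1)) = i := Fin.ext rfl
  simp [fEnd, hj, this, hi]

lemma fEnd_emb_not_mem (hn : 0 < n) {S : Finset (Fin (n - 1))} {i : Fin (n - 1)} (hi : i ∉ S) :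
    fEnd n S (embF i) = lastF n hn := by
  have hj : ((embF i : Fin n) : ℕ) < n - 1 := i.2
  have h2 : (⟨(embF i : Fin n), hj⟩ : Fin (n - 1)) = i := Fin.ext rfl
  simp [fEnd, hj, h2, hi, lastF]

lemma fEnd_last (hn : 0 < n) (S : Finset (Fin (n - 1))) :
    fEnd n S (lastF n hn) = lastF n hn := by
  have : ¬ ((lastF n hn : Fin n) : ℕ) < n - 1 := by simp [lastF]
  simp [fEnd, this]

lemma augRep_fEnd_uVec_mem (hn : 0 < n) {S : Finset (Fin (n - 1))} {i : Fin (n - 1)}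
    (hi : i ∈ S) : augRep n (fEnd n S) (uVec hn i) = uVec hn i := by
  apply Subtype.ext
  rw [augRep_uVec, uVec_val, fEnd_emb_mem hi, fEnd_last]

lemma augRep_fEnd_uVec_not_mem (hn : 0 < n) {S : Finset (Fin (n - 1))} {i : Fin (n - 1)}
    (hi : i ∉ S) : augRep n (fEnd n S) (uVec hn i) = 0 := by
  apply Subtype.ext
  rw [augRep_uVec, fEnd_emb_not_mem hn hi, fEnd_last]
  simp

lemma fEnd_wedge_mem (hn : 0 < n) (k : ℕ) (S : Finset (Fin (n - 1)))
    (m : Fin k → Fin (n - 1)) (h : ∀ i, m i ∈ S) :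
    extAugRep n k (fEnd n S) (wedge k (uVec hn ∘ m)) = wedge k (uVec hn ∘ m) := by
  rw [extAugRep_wedge]
  congr 1
  funext i
  exact augRep_fEnd_uVec_mem hn (h i)

lemma fEnd_wedge_not_mem (hn : 0 < n) (k : ℕ) (S : Finset (Fin (n - 1)))
    (m : Fin k → Fin (n - 1)) (h : ¬ ∀ i, m i ∈ S) :
    extAugRep n k (fEnd n S) (wedge k (uVec hn ∘ m)) = 0 := by
  push_neg at h
  obtain ⟨i, hi⟩ := h
  rw [extAugRep_wedge]
  exact wedge_coord_zero _ _ i (augRep_fEnd_uVec_not_mem hn hi)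

lemma sum_fEnd_apply (hn : 0 < n) (k : ℕ) (x : ⋀[ℂ]^k ↥(Aug n)) :
    ∑ S ∈ Finset.powersetCard k (Finset.univ : Finset (Fin (n - 1))),
      extAugRep n k (fEnd n S) x = x := by
  classical
  induction wedge_span hn k x using Submodule.span_induction with
  | mem y hy =>
      obtain ⟨m, rfl⟩ := hy
      by_cases hm : Function.Injective m
      · have hT : Finset.image m Finset.univ ∈
            Finset.powersetCard k (Finset.univ : Finset (Fin (n - 1))) := by
          rw [Finset.mem_powersetCard_univ, Finset.card_image_of_injective _ hm,
            Finset.card_univ, Fintype.card_fin]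
        rw [Finset.sum_eq_single_of_mem _ hT]
        · exact fEnd_wedge_mem hn k _ m fun i => Finset.mem_image_of_mem m (Finset.mem_univ i)
        · intro S hS hSne
          refine fEnd_wedge_not_mem hn k S m fun hall => hSne ?_
          have hsub : Finset.image m Finset.univ ⊆ S := by
            intro a ha
            obtain ⟨i, _, rfl⟩ := Finset.mem_image.1 ha
            exact hall i
          have h1 : S.card = k := Finset.mem_powersetCard_univ.1 hS
          have h2 : (Finset.image m Finset.univ).card = k :=
            Finset.mem_powersetCard_univ.1 hT
          exact (Finset.eq_of_subset_of_card_le hsub (by omega)).symm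
      · have h0 : wedge k (uVec hn ∘ m) = 0 := by
          simp only [Function.Injective, not_forall] at hm
          obtain ⟨i, j, hij, hne⟩ := hm
          exact wedge_eq_zero_of_eq k _ (by simp [Function.comp, hij]) hne
        simp [h0]
  | zero => simp
  | add y z _ _ hy hz => simp [map_add, Finset.sum_add_distrib, hy, hz]
  | smul c y _ hy => simp [map_smul, ← Finset.smul_sum, hy]

/-- Coordinate extraction as a linear map. -/
noncomputable def coordMap (n k : ℕ) (e : Fin k → Fin (n - 1)) :
    ↥(Aug n) →ₗ[ℂ] (Fin k → ℂ) where
  toFun v := fun j => (v : Fin n → ℂ) (embF (e j))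
  map_add' := by intros; rfl
  map_smul' := by intros; rfl

/-- The determinant of selected coordinates, as an alternating map. -/
noncomputable def detFun (n k : ℕ) (e : Fin k → Fin (n - 1)) :
    (↥(Aug n)) [⋀^Fin k]→ₗ[ℂ] ℂ :=
  (Matrix.detRowAlternating : (Fin k → ℂ) [⋀^Fin k]→ₗ[ℂ] ℂ).compLinearMap (coordMap n k e)

lemma detFun_uVec (hn : 0 < n) (k : ℕ) (e : Fin k → Fin (n - 1))
    (he : Function.Injective e) : detFun n k e (uVec hn ∘ e) = 1 := by
  classical
  have hmat : (Matrix.of fun i => coordMap n k e ((uVec hn ∘ e) i))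
      = (1 : Matrix (Fin k) (Fin k) ℂ) := by
    ext i j
    have h1 : coordMap n k e ((uVec hn ∘ e) i) j
        = (uVec hn (e i) : Fin n → ℂ) (embF (e j)) := rfl
    rw [Matrix.of_apply, h1, uVec_val, Pi.sub_apply, Pi.single_apply, Pi.single_apply]
    have h2 : ¬ (embF (e j) : Fin n) = lastF n hn := embF_ne_lastF hn (e j)
    have h3 : ((embF (e j) : Fin n) = embF (e i)) ↔ (i = j) := by
      constructor
      · intro h; exact (he (embF_injective h)).symm
      · intro h; subst h; rfl
    rw [Matrix.one_apply]
    by_cases h : i = j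
    · subst h; simp [h2]
    · have h4 : ¬ embF (e j) = embF (e i) := fun hh => h (h3.1 hh)
      simp [h2, h, h4]
  have : detFun n k e (uVec hn ∘ e)
      = Matrix.det (Matrix.of fun i => coordMap n k e ((uVec hn ∘ e) i)) := rfl
  rw [this, hmat, Matrix.det_one]

lemma wedge_ne_zero (hn : 0 < n) (k : ℕ) (e : Fin k → Fin (n - 1))
    (he : Function.Injective e) : wedge k (uVec hn ∘ e) ≠ 0 := by
  classical
  intro h0
  have hv : (wedge k (uVec hn ∘ e) : ExteriorAlgebra ℂ ↥(Aug n)) = 0 := by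
    rw [h0]; rfl
  have := congrArg (ExteriorAlgebra.liftAlternating
    (Function.update (fun i => (0 : (↥(Aug n)) [⋀^Fin i]→ₗ[ℂ] ℂ)) k (detFun n k e))) hv
  rw [show (wedge k (uVec hn ∘ e) : ExteriorAlgebra ℂ ↥(Aug n))
      = ExteriorAlgebra.ιMulti ℂ k (uVec hn ∘ e) from rfl,
    ExteriorAlgebra.liftAlternating_apply_ιMulti, Function.update_self, map_zero,
    detFun_uVec hn k e he] at this
  exact one_ne_zero this

lemma wedge_mem_span_singleton (hn : 0 < n) (k : ℕ) {S : Finset (Fin (n - 1))}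
    {e : Fin k → Fin (n - 1)} (hee : ∀ i, e i ∈ S) (heinj : Function.Injective e)
    (hecard : S.card = k) (m : Fin k → Fin (n - 1)) (hm : ∀ i, m i ∈ S) :
    wedge k (uVec hn ∘ m) ∈ Submodule.span ℂ {wedge k (uVec hn ∘ e)} := by
  classical
  by_cases hinj : Function.Injective m
  · -- both `e` and `m` are bijections onto `S`; get a permutation
    have hecardim : (Finset.image e Finset.univ).card = k := by
      rw [Finset.card_image_of_injective _ heinj, Finset.card_univ, Fintype.card_fin]
    have heim : Finset.image e Finset.univ = S := by
      apply Finset.eq_of_subset_of_card_le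
      · intro a ha; obtain ⟨i, _, rfl⟩ := Finset.mem_image.1 ha; exact hee i
      · omega
    have hsurj : ∀ a ∈ S, ∃ i, e i = a := by
      intro a ha
      rw [← heim] at ha
      obtain ⟨i, _, rfl⟩ := Finset.mem_image.1 ha
      exact ⟨i, rfl⟩
    choose g hg using fun i => hsurj (m i) (hm i)
    have hginj : Function.Injective g := by
      intro a b hab
      apply hinj
      rw [← hg a, ← hg b, hab]
    let σ : Equiv.Perm (Fin k) := Equiv.ofBijective g (Finite.injective_iff_bijective.1 hginj)
    have hcomp : uVec hn ∘ m = (uVec hn ∘ e) ∘ σ := by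
      funext i
      simp only [Function.comp]
      rw [show e (σ i) = m i from hg i]
    rw [hcomp, wedge_perm]
    exact Submodule.smul_mem _ _ (Submodule.mem_span_singleton_self _)
  · have h0 : wedge k (uVec hn ∘ m) = 0 := by
      simp only [Function.Injective, not_forall] at hinj
      obtain ⟨i, j, hij, hne⟩ := hinj
      exact wedge_eq_zero_of_eq k _ (by simp [Function.comp, hij]) hne
    rw [h0]
    exact Submodule.zero_mem _

lemma exists_end_wedge (hn : 0 < n) (k : ℕ) {e : Fin k → Fin (n - 1)}
    (he : Function.Injective e) (m : Fin k → Fin (n - 1)) :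
    ∃ g : Function.End (Fin n),
      extAugRep n k g (wedge k (uVec hn ∘ e)) = wedge k (uVec hn ∘ m) := by
  classical
  have hinj : Function.Injective (fun i => (embF (e i) : Fin n)) := by
    intro a b hab
    exact he (embF_injective hab)
  refine ⟨Function.extend (fun i => (embF (e i) : Fin n)) (fun i => embF (m i)) id, ?_⟩
  refine (extAugRep_wedge k _ _).trans ?_
  congr 1
  funext i
  apply Subtype.ext
  simp only [Function.comp_apply]
  erw [augRep_uVec]
  have h1 : Function.extend (fun i => (embF (e i) : Fin n)) (fun i => embF (m i)) id
      (embF (e i)) = embF (m i) := hinj.extend_apply _ _ i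
  have h2 : Function.extend (fun i => (embF (e i) : Fin n)) (fun i => embF (m i)) id
      (lastF n hn) = lastF n hn := by
    rw [Function.extend_apply' _ _ _ (fun ⟨a, ha⟩ => embF_ne_lastF hn (e a) ha)]
    rfl
  rw [h1, h2, ← uVec_val]

end SimpleAuxT

open SimpleAuxT in
/-- For `1 ≤ r ≤ n`, the exterior power `Λ^{r−1}(Aug(ℂ^n))` is a simple
`ℂ[T_n]`-module. -/
theorem exteriorPower_aug_simple (n r : ℕ) (hr : 1 ≤ r) (hrn : r ≤ n) :
    IsSimpleModule (MonoidAlgebra ℂ (Function.End (Fin n))) ((extAugRep n (r-1)).asModule) := by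
  classical
  have hn : 0 < n := lt_of_lt_of_le hr hrn
  set k := r - 1 with hkdef
  have hkn : k ≤ n - 1 := by omega
  set ρ := extAugRep n k with hρ
  have key_smul : ∀ (g : Function.End (Fin n)) (x : ρ.asModule),
      (MonoidAlgebra.single g (1 : ℂ)) • x = ρ g x := by
    intro g x
    show ρ.asAlgebraHom (MonoidAlgebra.single g 1) x = ρ g x
    rw [Representation.asAlgebraHom_single_one]
  have key_csmul : ∀ (c : ℂ) (x : ρ.asModule),
      (MonoidAlgebra.single (1 : Function.End (Fin n)) c) • x = c • x := by
    intro c x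
    show ρ.asAlgebraHom (MonoidAlgebra.single 1 c) x = c • x
    rw [Representation.asAlgebraHom_single]
    simp
    rfl
  set e0 : Fin k → Fin (n - 1) := fun i => ⟨i, lt_of_lt_of_le i.2 hkn⟩ with he0
  have he0inj : Function.Injective e0 := by
    intro a b hab
    have h2 := congrArg Fin.val hab
    exact Fin.ext h2
  have h0 : wedge k (uVec hn ∘ e0) ≠ 0 := wedge_ne_zero hn k e0 he0inj
  have hbotne : (⊥ : Submodule (MonoidAlgebra ℂ (Function.End (Fin n))) ρ.asModule) ≠ ⊤ := by
    intro h
    have hmem : (wedge k (uVec hn ∘ e0) : ρ.asModule)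
        ∈ (⊥ : Submodule (MonoidAlgebra ℂ (Function.End (Fin n))) ρ.asModule) := by
      rw [h]; trivial
    replace hmem := (Submodule.mem_bot (M := ρ.asModule) (MonoidAlgebra ℂ (Function.End (Fin n)))).1 hmem
    exact h0 hmem
  haveI : Nontrivial (Submodule (MonoidAlgebra ℂ (Function.End (Fin n))) ρ.asModule) :=
    ⟨⊥, ⊤, hbotne⟩
  refine { eq_bot_or_eq_top := fun N => ?_ }
  rcases eq_or_ne N ⊥ with hN | hN
  · exact Or.inl hN
  right
  obtain ⟨x, hxN, hx0⟩ := Submodule.exists_mem_ne_zero_of_ne_bot hN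
  have hsum := sum_fEnd_apply hn k x
  have hex : ∃ S ∈ Finset.powersetCard k (Finset.univ : Finset (Fin (n - 1))),
      extAugRep n k (fEnd n S) x ≠ 0 := by
    by_contra hall
    push_neg at hall
    apply hx0
    have hz : ∑ S ∈ Finset.powersetCard k (Finset.univ : Finset (Fin (n - 1))),
        extAugRep n k (fEnd n S) x = 0 := Finset.sum_eq_zero hall
    rw [hz] at hsum
    exact hsum.symm
  obtain ⟨S, hSmem, hSne⟩ := hex
  have hScard : S.card = k := Finset.mem_powersetCard_univ.1 hSmem
  set e : Fin k → Fin (n - 1) := fun i => ((S.orderIsoOfFin hScard i : Fin (n - 1))) with hedef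
  have hee : ∀ i, e i ∈ S := fun i => (S.orderIsoOfFin hScard i).2
  have heinj : Function.Injective e := by
    intro a b hab
    exact (S.orderIsoOfFin hScard).injective (Subtype.ext hab)
  set w := wedge k (uVec hn ∘ e) with hw
  set y := extAugRep n k (fEnd n S) x with hy
  have hyN : y ∈ N := by
    have := N.smul_mem (MonoidAlgebra.single (fEnd n S) (1 : ℂ)) hxN
    rwa [key_smul] at this
  have hyspan : y ∈ Submodule.span ℂ {w} := by
    have hx := wedge_span hn k x
    have himg : extAugRep n k (fEnd n S) x ∈ Submodule.map (extAugRep n k (fEnd n S))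
        (Submodule.span ℂ (Set.range fun m : Fin k → Fin (n - 1) => wedge k (uVec hn ∘ m))) :=
      Submodule.mem_map_of_mem hx
    rw [Submodule.map_span] at himg
    refine Submodule.span_le.2 ?_ himg
    rintro _ ⟨_, ⟨m, rfl⟩, rfl⟩
    by_cases hm : ∀ i, m i ∈ S
    · rw [fEnd_wedge_mem hn k S m hm]
      exact SetLike.mem_coe.2 (wedge_mem_span_singleton hn k hee heinj hScard m hm)
    · rw [fEnd_wedge_not_mem hn k S m hm]
      exact SetLike.mem_coe.2 (Submodule.zero_mem _)
  obtain ⟨c, hc⟩ := Submodule.mem_span_singleton.1 hyspan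
  have hcne : c ≠ 0 := by
    rintro rfl
    rw [zero_smul] at hc
    exact hSne hc.symm
  have hwN : w ∈ N := by
    have h1 : (c⁻¹ : ℂ) • y ∈ N := by
      have := N.smul_mem (MonoidAlgebra.single (1 : Function.End (Fin n)) (c⁻¹ : ℂ)) hyN
      erw [key_csmul] at this
      exact this
    rwa [← hc, smul_smul, inv_mul_cancel₀ hcne, one_smul] at h1
  rw [eq_top_iff]
  intro z hztop
  clear hztop
  induction wedge_span hn k z using Submodule.span_induction with
  | mem w' hw' =>
      obtain ⟨m, rfl⟩ := hw'
      show wedge k (uVec hn ∘ m) ∈ N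
      by_cases hm : Function.Injective m
      · obtain ⟨g, hg⟩ := exists_end_wedge hn k heinj m
        have := N.smul_mem (MonoidAlgebra.single g (1 : ℂ)) hwN
        erw [key_smul] at this
        rw [← hg]
        exact this
      · have hzero : wedge k (uVec hn ∘ m) = 0 := by
          simp only [Function.Injective, not_forall] at hm
          obtain ⟨i, j, hij, hne⟩ := hm
          exact wedge_eq_zero_of_eq k _ (by simp [Function.comp, hij]) hne
        rw [hzero]
        exact N.zero_mem
  | zero => exact N.zero_mem
  | add a b _ _ ha hb => exact N.add_mem ha hb
  | smul c' a _ ha =>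
      have := N.smul_mem (MonoidAlgebra.single (1 : Function.End (Fin n)) c') ha
      rwa [key_csmul] at this
end

section
/- For 1 ≤ r ≤ n and the idempotent e_m ∈ T_n (e_m(i)=i for i≤m, e_m(i)=1 for i>m), we have e_m · Λ^{r−1}(Aug(ℂ^n)) = 0 if and only if m < r. In particular, every map f ∈ T_n of rank less than r acts as zero on Λ^{r−1}(Aug(ℂ^n)). -/
/-! ### Auxiliary lemmas for the main theorem -/

set_option maxHeartbeats 1000000
set_option synthInstance.maxHeartbeats 1000000

lemma natRep_apply' (n : ℕ) (f : Function.End (Fin n)) (x : Fin n → ℂ) (j : Fin n) :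
    natRep n f x j = ∑ i, if f i = j then x i else 0 := rfl

lemma natRep_single (n : ℕ) (f : Function.End (Fin n)) (i0 : Fin n) :
    natRep n f (Pi.single i0 1) = Pi.single (f i0) 1 := by
  funext j
  rw [natRep_apply']
  rw [Finset.sum_eq_single i0]
  · simp [Pi.single_apply, eq_comm]
  · intro b _ hb
    simp [Pi.single_apply, hb]
  · simp

lemma natRep_support (n : ℕ) (f : Function.End (Fin n)) (x : Fin n → ℂ) (j : Fin n)
    (hj : j ∉ Finset.univ.image f) : natRep n f x j = 0 := by
  rw [natRep_apply']
  apply Finset.sum_eq_zero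
  intro i _
  have : f i ≠ j := fun h => hj (Finset.mem_image.2 ⟨i, Finset.mem_univ i, h⟩)
  simp [this]

/-- The subspace of vectors supported on `S` with coordinate sum zero. -/
noncomputable def Wsub (n : ℕ) (S : Finset (Fin n)) : Submodule ℂ (Fin n → ℂ) where
  carrier := {y | (∑ i, y i = 0) ∧ ∀ j ∉ S, y j = 0}
  add_mem' := by
    intro a b ha hb
    refine ⟨by simp [Finset.sum_add_distrib, ha.1, hb.1], fun j hj => by
      simp [ha.2 j hj, hb.2 j hj]⟩
  zero_mem' := by simp
  smul_mem' := by
    intro c a ha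
    refine ⟨by simp [← Finset.mul_sum, ha.1], fun j hj => by simp [ha.2 j hj]⟩

lemma finrank_Wsub_le (n : ℕ) (S : Finset (Fin n)) (j0 : Fin n) (hj0 : j0 ∈ S) :
    Module.finrank ℂ (Wsub n S) ≤ S.card - 1 := by
  classical
  let φ : Wsub n S →ₗ[ℂ] ({ j // j ∈ S.erase j0 } → ℂ) :=
    { toFun := fun y j => (y : Fin n → ℂ) j
      map_add' := fun a b => rfl
      map_smul' := fun c a => rfl }
  have hinj : Function.Injective φ := by
    rw [← LinearMap.ker_eq_bot, LinearMap.ker_eq_bot']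
    intro y hy
    have h1 : ∀ j ∈ S.erase j0, (y : Fin n → ℂ) j = 0 := fun j hj => congrFun hy ⟨j, hj⟩
    have hzero : ∀ j, j ≠ j0 → (y : Fin n → ℂ) j = 0 := by
      intro j hj
      by_cases hjS : j ∈ S
      · exact h1 j (Finset.mem_erase.2 ⟨hj, hjS⟩)
      · exact y.2.2 j hjS
    have hsum := y.2.1
    rw [Finset.sum_eq_single j0 (fun b _ hb => hzero b hb) (by simp)] at hsum
    apply Subtype.ext
    funext j
    show (y : Fin n → ℂ) j = 0
    by_cases hj : j = j0
    · rw [hj]; exact hsum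
    · exact hzero j hj
  have h := LinearMap.finrank_le_finrank_of_injective hinj
  rw [Module.finrank_pi] at h
  have hcard : Fintype.card { j // j ∈ S.erase j0 } = (S.erase j0).card := Fintype.card_coe _
  rw [hcard, Finset.card_erase_of_mem hj0] at h
  exact h

lemma augRep_coe (n : ℕ) (f : Function.End (Fin n)) (x : ↥(Aug n)) :
    ((augRep n f x : ↥(Aug n)) : Fin n → ℂ) = natRep n f (x : Fin n → ℂ) := rfl

lemma dependent_of_small (n r : ℕ) (f : Function.End (Fin n)) (hn : 0 < n)
    (hk : (Finset.univ.image f).card < r) (v : Fin (r-1) → ↥(Aug n)) :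
    ¬ LinearIndependent ℂ (fun i => augRep n f (v i)) := by
  classical
  intro hli
  set S := Finset.univ.image f with hSdef
  have hS : 0 < S.card := by
    apply Finset.card_pos.2
    exact ⟨f ⟨0, hn⟩, Finset.mem_image.2 ⟨⟨0, hn⟩, Finset.mem_univ _, rfl⟩⟩
  obtain ⟨j0, hj0⟩ := Finset.card_pos.1 hS
  let u : Fin (r-1) → Wsub n S := fun i =>
    ⟨((augRep n f (v i) : ↥(Aug n)) : Fin n → ℂ),
      ⟨(augRep n f (v i)).2, fun j hj => natRep_support n f _ j hj⟩⟩
  have h2 : LinearIndependent ℂ (fun i => ((augRep n f (v i) : ↥(Aug n)) : Fin n → ℂ)) :=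
    hli.map' (Aug n).subtype (Submodule.ker_subtype _)
  have h3 : LinearIndependent ℂ u :=
    LinearIndependent.of_comp (Wsub n S).subtype h2
  have h4 := h3.fintype_card_le_finrank
  rw [Fintype.card_fin] at h4
  have h5 := finrank_Wsub_le n S j0 hj0
  omega

lemma extAugRep_eq_zero (n r : ℕ) (f : Function.End (Fin n)) (hn : 0 < n)
    (hk : (Finset.univ.image f).card < r) : extAugRep n (r-1) f = 0 := by
  have key : ∀ y ∈ ⋀[ℂ]^(r-1) ↥(Aug n), ExteriorAlgebra.map (augRep n f) y = 0 := by
    intro y hy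
    rw [← ExteriorAlgebra.ιMulti_span_fixedDegree] at hy
    induction hy using Submodule.span_induction with
    | mem z hz =>
        obtain ⟨v, rfl⟩ := hz
        rw [ExteriorAlgebra.map_apply_ιMulti]
        exact AlternatingMap.map_linearDependent _ _ (dependent_of_small n r f hn hk v)
    | zero => simp
    | add y z _ _ hy hz => rw [map_add, hy, hz, add_zero]
    | smul c y _ hy => rw [map_smul, hy, smul_zero]
  apply LinearMap.ext
  intro x
  apply Subtype.ext
  show ExteriorAlgebra.map (augRep n f) (x : ExteriorAlgebra ℂ ↥(Aug n)) = _
  rw [key _ x.2]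
  rfl

/-- The family `v_{i+1} - v_0`, `0 ≤ i < r-1`, in the augmentation submodule. -/
noncomputable def aFam (n r : ℕ) (hr : 1 ≤ r) (hrn : r ≤ n) : Fin (r-1) → ↥(Aug n) :=
  fun i => ⟨Pi.single (⟨(i:ℕ)+1, by have := i.isLt; omega⟩ : Fin n) 1 -
      Pi.single (⟨0, by omega⟩ : Fin n) 1, by
    show ∑ j, _ = 0
    simp [Finset.sum_sub_distrib, Finset.sum_pi_single]⟩

lemma eIdem_apply_of_lt (n m : ℕ) (i : Fin n) (h : (i : ℕ) < m) : eIdem n m i = i := by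
  simp [eIdem, h]

lemma natRep_aFam_fixed (n r m : ℕ) (hr : 1 ≤ r) (hrn : r ≤ n) (hm : 1 ≤ m)
    (hrm : r ≤ m) (i : Fin (r-1)) :
    natRep n (eIdem n m) ((aFam n r hr hrn i : ↥(Aug n)) : Fin n → ℂ) =
      ((aFam n r hr hrn i : ↥(Aug n)) : Fin n → ℂ) := by
  show natRep n (eIdem n m) (Pi.single _ 1 - Pi.single _ 1) = _
  rw [map_sub, natRep_single, natRep_single,
    eIdem_apply_of_lt n m _ (by simp; have := i.isLt; omega),
    eIdem_apply_of_lt n m _ (by simp; omega)]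
  rfl

/-- Coordinates `1, …, r-1` of a vector in the augmentation submodule. -/
noncomputable def coordMap (n r : ℕ) (hrn : r ≤ n) : ↥(Aug n) →ₗ[ℂ] (Fin (r-1) → ℂ) where
  toFun x := fun i => (x : Fin n → ℂ) ⟨(i:ℕ)+1, by have := i.isLt; omega⟩
  map_add' := fun a b => rfl
  map_smul' := fun c a => rfl

/-- An alternating form on `Aug(ℂ^n)` given by the determinant of coordinates
`1, …, r-1`. -/
noncomputable def phiAlt (n r : ℕ) (hrn : r ≤ n) : (↥(Aug n)) [⋀^Fin (r-1)]→ₗ[ℂ] ℂ :=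
  (Matrix.detRowAlternating).compLinearMap (coordMap n r hrn)

lemma phiAlt_aFam (n r : ℕ) (hr : 1 ≤ r) (hrn : r ≤ n) :
    phiAlt n r hrn (aFam n r hr hrn) = 1 := by
  show Matrix.detRowAlternating (fun i => coordMap n r hrn (aFam n r hr hrn i)) = 1
  have : Matrix.of (fun i => coordMap n r hrn (aFam n r hr hrn i)) = (1 : Matrix _ _ ℂ) := by
    ext i j
    rw [Matrix.of_apply]
    have hval : ((aFam n r hr hrn i : ↥(Aug n)) : Fin n → ℂ) =
        Pi.single (⟨(i:ℕ)+1, by have := i.isLt; omega⟩ : Fin n) 1 -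
        Pi.single (⟨0, by have := i.isLt; omega⟩ : Fin n) 1 := rfl
    show ((aFam n r hr hrn i : ↥(Aug n)) : Fin n → ℂ)
        ⟨(j:ℕ)+1, by have := j.isLt; omega⟩ = (1 : Matrix _ _ ℂ) i j
    rw [hval]
    simp only [Pi.sub_apply, Pi.single_apply, Matrix.one_apply, Fin.mk.injEq]
    by_cases h : (i : ℕ) = (j : ℕ)
    · have h1 : ((⟨(j:ℕ)+1, by have := j.isLt; omega⟩ : Fin n) : ℕ) = (⟨(i:ℕ)+1, by
        have := i.isLt; omega⟩ : Fin n) := by simp [h]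
      have hij : i = j := Fin.ext h
      simp [Fin.ext_iff, h, hij]
    · have h2 : ¬ ((j:ℕ)+1 = (i:ℕ)+1) := by omega
      simp [Fin.ext_iff, h2, h, Ne.symm h]
  show Matrix.det (Matrix.of fun i => coordMap n r hrn (aFam n r hr hrn i)) = 1
  rw [this, Matrix.det_one]

lemma extAugRep_ne_zero (n r m : ℕ) (hr : 1 ≤ r) (hrn : r ≤ n) (hm : 1 ≤ m)
    (hrm : r ≤ m) : extAugRep n (r-1) (eIdem n m) ≠ 0 := by
  classical
  intro h0
  set a := aFam n r hr hrn with ha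
  have hmem : ExteriorAlgebra.ιMulti ℂ (r-1) a ∈ ⋀[ℂ]^(r-1) ↥(Aug n) :=
    ExteriorAlgebra.ιMulti_range ℂ (r-1) ⟨a, rfl⟩
  have h1 : extAugRep n (r-1) (eIdem n m) ⟨_, hmem⟩ = ⟨_, hmem⟩ := by
    apply Subtype.ext
    show ExteriorAlgebra.map (augRep n (eIdem n m)) (ExteriorAlgebra.ιMulti ℂ (r-1) a) = _
    rw [ExteriorAlgebra.map_apply_ιMulti]
    congr 1
    funext i
    apply Subtype.ext
    show natRep n (eIdem n m) ((a i : ↥(Aug n)) : Fin n → ℂ) = _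
    exact natRep_aFam_fixed n r m hr hrn hm hrm i
  rw [h0] at h1
  have h2 : ExteriorAlgebra.ιMulti ℂ (r-1) a = 0 := by
    have := congrArg Subtype.val h1.symm
    simpa using this
  have h3 := congrArg
    (ExteriorAlgebra.liftAlternating
      (Function.update (fun i => (0 : (↥(Aug n)) [⋀^Fin i]→ₗ[ℂ] ℂ)) (r-1) (phiAlt n r hrn))) h2
  rw [ExteriorAlgebra.liftAlternating_apply_ιMulti, Function.update_self] at h3
  rw [phiAlt_aFam n r hr hrn] at h3
  simpa using h3

lemma card_image_eIdem (n m : ℕ) (hm : 1 ≤ m) (hmn : m ≤ n) :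
    (Finset.univ.image (eIdem n m)).card = m := by
  classical
  have heq : Finset.univ.image (eIdem n m) =
      Finset.univ.filter (fun j : Fin n => (j : ℕ) < m) := by
    refine Finset.ext fun j => ?_
    erw [Finset.mem_image]
    simp only [Finset.mem_image, Finset.mem_filter, Finset.mem_univ, true_and]
    constructor
    · rintro ⟨i, -, rfl⟩
      unfold eIdem
      split
      · assumption
      · simpa using Nat.lt_of_lt_of_le Nat.zero_lt_one hm
    · intro hj
      exact ⟨j, by unfold eIdem; simp [hj]⟩
  have hmap : Finset.univ.filter (fun j : Fin n => (j : ℕ) < m) =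
      Finset.map ⟨Fin.castLE hmn, Fin.castLE_injective hmn⟩ Finset.univ := by
    ext j
    simp only [Finset.mem_filter, Finset.mem_univ, true_and, Finset.mem_map,
      Function.Embedding.coeFn_mk]
    constructor
    · intro hj
      exact ⟨⟨(j : ℕ), hj⟩, by ext; simp⟩
    · rintro ⟨i, -, rfl⟩
      simpa using i.isLt
  rw [heq, hmap, Finset.card_map, Finset.card_univ, Fintype.card_fin]

/-- For the idempotent `e_m ∈ T_n` and `1 ≤ r, m ≤ n`, the action of `e_m` on
`Λ^{r−1}(Aug(ℂ^n))` is zero if and only if `m < r`. In particular, every map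
`f ∈ T_n` of rank less than `r` acts as zero on `Λ^{r−1}(Aug(ℂ^n))`. -/
theorem eIdem_kills_exteriorPower_iff (n r m : ℕ) (hr : 1 ≤ r) (hrn : r ≤ n)
    (hm : 1 ≤ m) (hmn : m ≤ n) :
    (extAugRep n (r-1) (eIdem n m) = 0 ↔ m < r) ∧
    (∀ f : Function.End (Fin n), (Finset.univ.image f).card < r →
      extAugRep n (r-1) f = 0) := by
  have hn : 0 < n := lt_of_lt_of_le hr hrn
  constructor
  · constructor
    · intro h0
      by_contra hmr
      push_neg at hmr
      exact extAugRep_ne_zero n r m hr hrn hm hmr h0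
    · intro hmr
      apply extAugRep_eq_zero n r _ hn
      rw [card_image_eIdem n m hm hmn]
      exact hmr
  · intro f hf
    exact extAugRep_eq_zero n r f hn hf
end

section
/- The one-dimensional representation of T_n given by sgn on permutations and 0 on non-bijective maps is a well-defined monoid homomorphism from T_n to (ℂ, ·), and the corresponding ℂ[T_n]-module is isomorphic to Λ^n(ℂ^n) with the natural action; in particular it is a projective simple ℂ[T_n]-module. -/
namespace SgnAux

open ExteriorAlgebra

variable (n : ℕ)

/-- standard basis of `ℂ^n` -/
noncomputable def e : Fin n → (Fin n → ℂ) := fun i => Pi.single i 1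

noncomputable def detFam : ∀ i : ℕ, (Fin n → ℂ) [⋀^Fin i]→ₗ[ℂ] ℂ :=
  Function.update (fun _ => 0) n Matrix.detRowAlternating

noncomputable def L : ExteriorAlgebra ℂ (Fin n → ℂ) →ₗ[ℂ] ℂ :=
  ExteriorAlgebra.liftAlternating (detFam n)

lemma L_iMulti (v : Fin n → (Fin n → ℂ)) :
    L n (ExteriorAlgebra.ιMulti ℂ n v) = (Matrix.of v).det := by
  rw [L, ExteriorAlgebra.liftAlternating_apply_ιMulti, detFam, Function.update_self]
  rfl

lemma L_e : L n (ExteriorAlgebra.ιMulti ℂ n (e n)) = 1 := by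
  rw [L_iMulti]
  have : (Matrix.of (e n)) = 1 := by
    ext i j
    simp [e, Pi.single_apply, Matrix.one_apply, eq_comm]
  rw [this, Matrix.det_one]

lemma iMulti_comp (f : Fin n → Fin n) :
    ExteriorAlgebra.ιMulti ℂ n (fun i => e n (f i)) =
      sgnExt n f • ExteriorAlgebra.ιMulti ℂ n (e n) := by
  by_cases h : Function.Bijective f
  · set σ := Equiv.ofBijective f h with hσ
    have h1 : (fun i => e n (f i)) = (e n) ∘ ⇑σ := rfl
    rw [h1, AlternatingMap.map_perm]
    unfold sgnExt
    rw [dif_pos h, ← hσ, Units.smul_def,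
      Int.cast_smul_eq_zsmul]
  · have hinj : ¬ Function.Injective f := fun hf => h ((Finite.injective_iff_bijective).1 hf)
    have : ¬ Function.Injective (fun i => e n (f i)) := by
      intro hc
      exact hinj fun a b hab => by
        have : e n (f a) = e n (f b) := by rw [hab]
        have := hc this
        simpa using this
      
    rw [AlternatingMap.map_eq_zero_of_not_injective _ _ this]
    unfold sgnExt
    rw [dif_neg h, zero_smul]

lemma mem_span (x : ExteriorAlgebra ℂ (Fin n → ℂ)) (hx : x ∈ ⋀[ℂ]^n (Fin n → ℂ)) :
    x = L n x • ExteriorAlgebra.ιMulti ℂ n (e n) := by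
  have hs : x ∈ Submodule.span ℂ {ExteriorAlgebra.ιMulti ℂ n (e n)} := by
    rw [← ExteriorAlgebra.ιMulti_span_fixedDegree] at hx
    induction hx using Submodule.span_induction with
    | mem y hy =>
        obtain ⟨v, rfl⟩ := hy
        have hv : v = fun i => ∑ j, v i j • e n j := by
          funext i k
          simp [e, Finset.sum_apply, Pi.single_apply]
        rw [hv]
        have := (ExteriorAlgebra.ιMulti ℂ n
            (M := Fin n → ℂ)).toMultilinearMap.map_sum (fun i j => v i j • e n j)
        simp only [AlternatingMap.coe_multilinearMap] at this
        rw [this]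
        refine Submodule.sum_mem _ fun r _ => ?_
        have := (ExteriorAlgebra.ιMulti ℂ n
            (M := Fin n → ℂ)).toMultilinearMap.map_smul_univ (fun i => v i (r i))
            (fun i => e n (r i))
        simp only [AlternatingMap.coe_multilinearMap] at this
        rw [this]
        refine Submodule.mem_span_singleton.2 ⟨(∏ i, v i (r i)) * sgnExt n r, ?_⟩
        conv_rhs => rw [iMulti_comp n r]
        rw [smul_smul]
    | zero => exact Submodule.zero_mem _
    | add y z _ _ hy hz => exact Submodule.add_mem _ hy hz
    | smul c y _ hy => exact Submodule.smul_mem _ c hy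
  obtain ⟨c, rfl⟩ := Submodule.mem_span_singleton.1 hs
  rw [map_smul, smul_eq_mul, L_e, mul_one]

/-- the generator of the top exterior power -/
noncomputable def om : ↥(⋀[ℂ]^n (Fin n → ℂ)) := wedge n (e n)

/-- the coordinate w.r.t. `om` -/
noncomputable def co (x : ↥(⋀[ℂ]^n (Fin n → ℂ))) : ℂ := L n x.val

lemma co_om : co n (om n) = 1 := L_e n

lemma eq_co_smul (x : ↥(⋀[ℂ]^n (Fin n → ℂ))) : x = co n x • om n := by
  refine Subtype.ext ?_
  rw [Submodule.coe_smul]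
  exact mem_span n x.val x.2

lemma om_ne_zero : om n ≠ 0 := by
  intro h
  have := co_om n
  rw [h] at this
  simp [co] at this

lemma co_smul (c : ℂ) (x : ↥(⋀[ℂ]^n (Fin n → ℂ))) : co n (c • x) = c * co n x := by
  simp [co, map_smul]

lemma natRep_single (f : Function.End (Fin n)) (k : Fin n) :
    natRep n f (Pi.single k 1) = (Pi.single (f k) 1 : Fin n → ℂ) := by
  funext j
  show (∑ i, if f i = j then (Pi.single k 1 : Fin n → ℂ) i else 0) = _
  have : ∀ i : Fin n, (if f i = j then (Pi.single k 1 : Fin n → ℂ) i else 0)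
      = if i = k then (if f k = j then (1:ℂ) else 0) else 0 := by
    intro i
    rcases eq_or_ne i k with rfl | hik
    · simp [Pi.single_apply]
    · simp [Pi.single_apply, hik]
  rw [Finset.sum_congr rfl fun i _ => this i, Finset.sum_ite_eq' Finset.univ k]
  simp [Pi.single_apply, eq_comm]

lemma extRep_val (f : Function.End (Fin n)) (x : ↥(⋀[ℂ]^n (Fin n → ℂ))) :
    (extRep n n f x).val = ExteriorAlgebra.map (natRep n f) x.val := rfl

lemma extRep_om (f : Function.End (Fin n)) :
    extRep n n f (om n) = sgnExt n f • om n := by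
  refine Subtype.ext ?_
  rw [extRep_val, Submodule.coe_smul]
  show ExteriorAlgebra.map (natRep n f) (ExteriorAlgebra.ιMulti ℂ n (e n)) = _
  rw [ExteriorAlgebra.map_apply_ιMulti]
  have : (natRep n f) ∘ (e n) = fun i => e n (f i) := by
    funext i
    exact natRep_single n f i
  rw [this]
  exact iMulti_comp n f

lemma sgnExt_eq_co (f : Function.End (Fin n)) :
    sgnExt n f = co n (extRep n n f (om n)) := by
  rw [extRep_om, co_smul, co_om, mul_one]

lemma sgnExt_one : sgnExt n 1 = 1 := by
  rw [sgnExt_eq_co, map_one]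
  exact co_om n

lemma sgnExt_mul (f g : Function.End (Fin n)) :
    sgnExt n (f * g) = sgnExt n f * sgnExt n g := by
  rw [sgnExt_eq_co, map_mul]
  show co n (extRep n n f (extRep n n g (om n))) = _
  rw [extRep_om, map_smul, extRep_om, co_smul, co_smul, co_om, mul_one, mul_comm]

/-- the equivalence `ℂ ≃ Λ^n(ℂ^n)` -/
noncomputable def phi : ℂ ≃ₗ[ℂ] ↥(⋀[ℂ]^n (Fin n → ℂ)) where
  toFun c := c • om n
  map_add' a b := add_smul a b _
  map_smul' a b := by simp [smul_smul]
  invFun := co n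
  left_inv c := by rw [co_smul, co_om, mul_one]
  right_inv x := (eq_co_smul n x).symm

lemma phi_intertwine (f : Function.End (Fin n)) (c : ℂ) :
    phi n (sgnExt n f * c) = extRep n n f (phi n c) := by
  show (sgnExt n f * c) • om n = extRep n n f (c • om n)
  rw [map_smul, extRep_om, smul_smul, mul_comm]

lemma co_add (x y : ↥(⋀[ℂ]^n (Fin n → ℂ))) : co n (x + y) = co n x + co n y := by
  simp [co]

lemma co_extRep (f : Function.End (Fin n)) (x : ↥(⋀[ℂ]^n (Fin n → ℂ))) :
    co n (extRep n n f x) = sgnExt n f * co n x := by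
  conv_lhs => rw [eq_co_smul n x]
  rw [map_smul, extRep_om, co_smul, co_smul, co_om, mul_one, mul_comm]

noncomputable def eta' : MonoidAlgebra ℂ (Function.End (Fin n)) :=
  (n.factorial : ℂ)⁻¹ • ∑ σ : Equiv.Perm (Fin n),
    MonoidAlgebra.single (permToEnd n σ) ((Equiv.Perm.sign σ : ℤ) : ℂ)

lemma sgnExt_perm (σ : Equiv.Perm (Fin n)) :
    sgnExt n (permToEnd n σ) = ((Equiv.Perm.sign σ : ℤ) : ℂ) := by
  have hb : Function.Bijective (permToEnd n σ) := σ.bijective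
  rw [sgnExt, dif_pos hb]
  have : Equiv.ofBijective (permToEnd n σ) hb = σ := Equiv.ext fun x => rfl
  rw [this]

lemma sq_sign (σ : Equiv.Perm (Fin n)) :
    ((Equiv.Perm.sign σ : ℤ) : ℂ) * ((Equiv.Perm.sign σ : ℤ) : ℂ) = 1 := by
  rw [← Int.cast_mul, ← Units.val_mul, Int.units_mul_self, Units.val_one, Int.cast_one]

lemma single_mul_eta (f : Function.End (Fin n)) :
    MonoidAlgebra.single f (1:ℂ) * eta' n = sgnExt n f • eta' n := by
  rw [eta', mul_smul_comm, Finset.mul_sum]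
  have hterm : ∀ σ : Equiv.Perm (Fin n),
      MonoidAlgebra.single f (1:ℂ) * MonoidAlgebra.single (permToEnd n σ)
        ((Equiv.Perm.sign σ : ℤ) : ℂ)
      = MonoidAlgebra.single (f * permToEnd n σ) ((Equiv.Perm.sign σ : ℤ) : ℂ) := by
    intro σ
    rw [MonoidAlgebra.single_mul_single, one_mul]
  rw [Finset.sum_congr rfl fun σ _ => hterm σ]
  by_cases h : Function.Bijective f
  · set σf := Equiv.ofBijective f h with hσf
    have key : ∀ σ : Equiv.Perm (Fin n), f * permToEnd n σ = permToEnd n (σf * σ) := by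
      intro σ; rfl
    have h1 : ∑ σ : Equiv.Perm (Fin n),
        MonoidAlgebra.single (f * permToEnd n σ) ((Equiv.Perm.sign σ : ℤ) : ℂ)
        = ∑ τ : Equiv.Perm (Fin n), MonoidAlgebra.single (permToEnd n τ)
            (((Equiv.Perm.sign σf : ℤ) : ℂ) * ((Equiv.Perm.sign τ : ℤ) : ℂ)) := by
      refine Fintype.sum_equiv (Equiv.mulLeft σf) _ _ fun σ => ?_
      have he : Equiv.mulLeft σf σ = σf * σ := rfl
      rw [key σ, he]
      congr 1
      rw [Equiv.Perm.sign_mul, Units.val_mul, Int.cast_mul, ← mul_assoc, sq_sign, one_mul]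
    rw [h1]
    have h2 : ∀ τ : Equiv.Perm (Fin n), MonoidAlgebra.single (permToEnd n τ)
        (((Equiv.Perm.sign σf : ℤ) : ℂ) * ((Equiv.Perm.sign τ : ℤ) : ℂ))
        = ((Equiv.Perm.sign σf : ℤ) : ℂ) •
          MonoidAlgebra.single (permToEnd n τ) ((Equiv.Perm.sign τ : ℤ) : ℂ) := by
      intro τ
      rw [MonoidAlgebra.smul_single']
    rw [Finset.sum_congr rfl fun τ _ => h2 τ, ← Finset.smul_sum, sgnExt, dif_pos h, ← hσf,
      smul_comm]
  · rw [sgnExt, dif_neg h, zero_smul]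
    obtain ⟨a, b, hab, hne⟩ := Function.not_injective_iff.1
      (fun hinj => h ((Finite.injective_iff_bijective).1 hinj))
    set t := Equiv.swap a b with ht
    have hft : ∀ σ : Equiv.Perm (Fin n), f * permToEnd n (t * σ) = f * permToEnd n σ := by
      intro σ
      funext x
      show f (t (σ x)) = f (σ x)
      rcases eq_or_ne (σ x) a with hx | hx
      · rw [hx, ht, Equiv.swap_apply_left, hab]
      rcases eq_or_ne (σ x) b with hx' | hx'
      · rw [hx', ht, Equiv.swap_apply_right, hab]
      · rw [ht, Equiv.swap_apply_of_ne_of_ne hx hx']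
    set S := ∑ σ : Equiv.Perm (Fin n),
      MonoidAlgebra.single (f * permToEnd n σ) ((Equiv.Perm.sign σ : ℤ) : ℂ) with hS
    have h1 : (∑ σ : Equiv.Perm (Fin n),
        MonoidAlgebra.single (f * permToEnd n σ) (-((Equiv.Perm.sign σ : ℤ) : ℂ))) = S := by
      refine Fintype.sum_equiv (Equiv.mulLeft t) _ _ fun σ => ?_
      have he : Equiv.mulLeft t σ = t * σ := rfl
      rw [he, hft σ]
      congr 1
      rw [Equiv.Perm.sign_mul, Units.val_mul, Int.cast_mul, Equiv.Perm.sign_swap hne]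
      push_cast
      ring
    have h2 : (∑ σ : Equiv.Perm (Fin n),
        MonoidAlgebra.single (f * permToEnd n σ) (-((Equiv.Perm.sign σ : ℤ) : ℂ))) = -S := by
      rw [hS, ← Finset.sum_neg_distrib]
      exact Finset.sum_congr rfl fun σ _ => MonoidAlgebra.single_neg _ _
    have hS3 : S = -S := by rw [← h2]; exact h1.symm
    have h3 : (2:ℂ) • S = 0 := by
      rw [two_smul]
      nth_rewrite 2 [hS3]
      exact add_neg_cancel S
    have h4 : S = 0 := by
      have := congrArg (fun x => (2:ℂ)⁻¹ • x) h3
      simpa [smul_smul] using this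
    rw [h4, smul_zero]

lemma key_mul (r : MonoidAlgebra ℂ (Function.End (Fin n))) (u : ↥(⋀[ℂ]^n (Fin n → ℂ))) :
    co n ((extRep n n).asAlgebraHom r u) • eta' n = r * (co n u • eta' n) := by
  induction r using MonoidAlgebra.induction_on with
  | of g =>
      rw [MonoidAlgebra.of_apply, Representation.asAlgebraHom_single, one_smul, co_extRep,
        mul_smul_comm, single_mul_eta, smul_smul, mul_comm]
  | add f g hf hg =>
      rw [map_add, LinearMap.add_apply, co_add, add_smul, hf, hg, add_mul]
  | smul c f hf =>
      have hmap : (extRep n n).asAlgebraHom (c • f) = c • (extRep n n).asAlgebraHom f := by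
        rw [← AlgHom.toLinearMap_apply, map_smul, AlgHom.toLinearMap_apply]
      rw [hmap, LinearMap.smul_apply, co_smul, mul_smul, hf, smul_mul_assoc]

lemma eta_om : (extRep n n).asAlgebraHom (eta' n) (om n) = om n := by
  have hmap : (extRep n n).asAlgebraHom (eta' n) = (n.factorial : ℂ)⁻¹ •
      ∑ σ : Equiv.Perm (Fin n), (extRep n n).asAlgebraHom
        (MonoidAlgebra.single (permToEnd n σ) ((Equiv.Perm.sign σ : ℤ) : ℂ)) := by
    rw [eta', ← AlgHom.toLinearMap_apply, map_smul, map_sum]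
    simp only [AlgHom.toLinearMap_apply]
  rw [hmap, LinearMap.smul_apply, LinearMap.sum_apply]
  have h1 : ∀ σ : Equiv.Perm (Fin n),
      (extRep n n).asAlgebraHom (MonoidAlgebra.single (permToEnd n σ)
        ((Equiv.Perm.sign σ : ℤ) : ℂ)) (om n) = om n := by
    intro σ
    rw [Representation.asAlgebraHom_single, LinearMap.smul_apply, extRep_om, sgnExt_perm,
      smul_smul, sq_sign, one_smul]
  rw [Finset.sum_congr rfl fun σ _ => h1 σ, Finset.sum_const, Finset.card_univ,
    Fintype.card_perm, Fintype.card_fin, ← Nat.cast_smul_eq_nsmul ℂ, smul_smul,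
    inv_mul_cancel₀ (by exact_mod_cast Nat.factorial_ne_zero n), one_smul]

end SgnAux

set_option maxHeartbeats 3200000 in
set_option synthInstance.maxHeartbeats 1600000 in
/-- The one-dimensional representation of `T_n` given by `sgn` on permutations and
`0` on non-bijective maps is a well-defined monoid homomorphism `T_n → (ℂ, ·)`, and
the corresponding `ℂ[T_n]`-module is isomorphic to the top exterior power `Λ^n(ℂ^n)`
with the natural action; in particular `Λ^n(ℂ^n)` is a projective simple
`ℂ[T_n]`-module. -/
theorem sign_representation_top_exteriorPower (n : ℕ) :
    sgnExt n 1 = 1 ∧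
    (∀ f g : Function.End (Fin n), sgnExt n (f * g) = sgnExt n f * sgnExt n g) ∧
    (∃ φ : ℂ ≃ₗ[ℂ] ↥(⋀[ℂ]^n (Fin n → ℂ)),
      ∀ (f : Function.End (Fin n)) (c : ℂ), φ (sgnExt n f * c) = extRep n n f (φ c)) ∧
    Module.Projective (MonoidAlgebra ℂ (Function.End (Fin n))) ((extRep n n).asModule) ∧
    IsSimpleModule (MonoidAlgebra ℂ (Function.End (Fin n))) ((extRep n n).asModule) := by
  classical
  have key : Module.Projective (MonoidAlgebra ℂ (Function.End (Fin n))) ((extRep n n).asModule)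
      ∧ IsSimpleModule (MonoidAlgebra ℂ (Function.End (Fin n))) ((extRep n n).asModule) := by
    set R := MonoidAlgebra ℂ (Function.End (Fin n)) with hR
    set ρ := extRep n n with hrho
    set E := ρ.asModuleEquiv with hE
    set p : ρ.asModule →ₗ[R] R :=
      { toFun := fun v => SgnAux.co n (E v) • SgnAux.eta' n
        map_add' := fun a b => by
          show SgnAux.co n (E (a + b)) • SgnAux.eta' n
            = SgnAux.co n (E a) • SgnAux.eta' n + SgnAux.co n (E b) • SgnAux.eta' n
          rw [E.map_add a b, SgnAux.co_add, add_smul]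
        map_smul' := fun r v => by
          show SgnAux.co n (E (r • v)) • SgnAux.eta' n
            = r • (SgnAux.co n (E v) • SgnAux.eta' n)
          rw [Representation.asModuleEquiv_map_smul, SgnAux.key_mul, smul_eq_mul] } with hp
    set q : R →ₗ[R] ρ.asModule :=
      LinearMap.toSpanSingleton R ρ.asModule (E.symm (SgnAux.om n)) with hq
    have hsplit : q.comp p = LinearMap.id := by
      refine LinearMap.ext fun v => ?_
      show (SgnAux.co n (E v) • SgnAux.eta' n) • E.symm (SgnAux.om n) = v
      apply E.injective
      rw [Representation.asModuleEquiv_map_smul]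
      have hmap : ρ.asAlgebraHom (SgnAux.co n (E v) • SgnAux.eta' n)
          = SgnAux.co n (E v) • ρ.asAlgebraHom (SgnAux.eta' n) := by
        rw [← AlgHom.toLinearMap_apply, map_smul, AlgHom.toLinearMap_apply]
      rw [hmap, LinearMap.smul_apply, E.apply_symm_apply, SgnAux.eta_om]
      exact (SgnAux.eq_co_smul n (E v)).symm
    haveI ntM : Nontrivial ρ.asModule :=
      ⟨⟨E.symm (SgnAux.om n), 0, fun hc =>
        SgnAux.om_ne_zero n ((map_eq_zero_iff E.symm E.symm.injective).1 hc)⟩⟩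
    constructor
    · exact Module.Projective.of_split p q hsplit
    · rw [isSimpleModule_iff]; refine ⟨fun N => ?_⟩
      rcases eq_or_ne N ⊥ with h | h
      · exact Or.inl h
      · refine Or.inr ?_
        obtain ⟨v, hvN, hv0⟩ := Submodule.exists_mem_ne_zero_of_ne_bot h
        have hcov : SgnAux.co n (E v) ≠ 0 := by
          intro hc
          refine hv0 (E.injective ?_)
          rw [E.map_zero, SgnAux.eq_co_smul n (E v), hc, zero_smul]
        rw [eq_top_iff]
        rintro x -
        have hx : x = (algebraMap ℂ R (SgnAux.co n (E x) / SgnAux.co n (E v))) • v := by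
          apply E.injective
          rw [Representation.asModuleEquiv_map_smul, AlgHom.commutes,
            Module.algebraMap_end_apply]
          have hsc : ∀ c : ℂ, c • E v = (c * SgnAux.co n (E v)) • SgnAux.om n := by
            intro c
            conv_lhs => rw [SgnAux.eq_co_smul n (E v)]
            rw [smul_smul]
          rw [hsc, div_mul_cancel₀ _ hcov]
          exact SgnAux.eq_co_smul n (E x)
        rw [hx]
        exact N.smul_mem _ hvN
  exact ⟨SgnAux.sgnExt_one n, SgnAux.sgnExt_mul n,
    ⟨SgnAux.phi n, SgnAux.phi_intertwine n⟩, key.1, key.2⟩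
end
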